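/- For all integers m, n with mn(m+n) ≠ 0, none of the six differences t_1(m,n) - t_1(β^i(m,n)) for 1 ≤ i ≤ 5 vanishes, where β(m,n) = (-n, m+n) and t_1(m,n) = m^3+2m^2n+mn^2+n^3; explicitly, these differences equal -2mn^2, 2n(m^2+mn+n^2), 2t_1(m,n), 2(m+n)(m^2+mn+n^2), and 2m^2(m+n) respectively. -/

import Mathlib

lemma t1_coprime_ne (a b : ℤ) (hc : IsCoprime a b) :
    a^3 + 2*a^2*b + a*b^2 + b^3 ≠ 0 := by
  intro h
  have ha : a ∣ b^3 := ⟨-(a^2 + 2*a*b + b^2), by linear_combination h⟩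
  have hb : b ∣ a^3 := ⟨-(2*a^2 + a*b + b^2), by linear_combination h⟩
  have ua : IsUnit a := (hc.pow_right (n := 3)).isUnit_of_dvd ha
  have ub : IsUnit b := (hc.symm.pow_right (n := 3)).isUnit_of_dvd hb
  rcases Int.isUnit_iff.mp ua with rfl | rfl <;>
    rcases Int.isUnit_iff.mp ub with rfl | rfl <;> norm_num at h

lemma t1_ne (m n : ℤ) (hm : m ≠ 0) (hn : n ≠ 0) :
    m^3 + 2*m^2*n + m*n^2 + n^3 ≠ 0 := by
  intro heq
  have hgpos : 0 < Int.gcd m n := Int.gcd_pos_of_ne_zero_left n hm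
  set g : ℤ := (Int.gcd m n : ℤ) with hgdef
  have hgne : g ≠ 0 := by rw [hgdef]; exact_mod_cast hgpos.ne'
  obtain ⟨a, ha⟩ : g ∣ m := Int.gcd_dvd_left m n
  obtain ⟨b, hb⟩ : g ∣ n := Int.gcd_dvd_right m n
  have hma : m / g = a := by rw [ha]; exact Int.mul_ediv_cancel_left _ hgne
  have hnb : n / g = b := by rw [hb]; exact Int.mul_ediv_cancel_left _ hgne
  have hcop : IsCoprime a b := by
    rw [← hma, ← hnb, Int.isCoprime_iff_gcd_eq_one]
    exact Int.gcd_div_gcd_div_gcd hgpos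
  apply t1_coprime_ne a b hcop
  have key : g^3 * (a^3 + 2*a^2*b + a*b^2 + b^3) = 0 := by
    rw [ha, hb] at heq; linear_combination heq
  rcases mul_eq_zero.mp key with h' | h'
  · exact absurd (pow_eq_zero_iff (by norm_num) |>.mp h') hgne
  · exact h'

theorem t1_beta_differences (m n : ℤ) (h : m*n*(m+n) ≠ 0) :
    (let t1 : ℤ → ℤ → ℤ := fun x y => x^3 + 2*x^2*y + x*y^2 + y^3
     (t1 m n - t1 (-n) (m+n) = -2*m*n^2) ∧
     (t1 m n - t1 (-(m+n)) m = 2*n*(m^2+m*n+n^2)) ∧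
     (t1 m n - t1 (-m) (-n) = 2*(t1 m n)) ∧
     (t1 m n - t1 n (-(m+n)) = 2*(m+n)*(m^2+m*n+n^2)) ∧
     (t1 m n - t1 (m+n) (-m) = 2*m^2*(m+n)) ∧
     (t1 m n - t1 (-n) (m+n) ≠ 0) ∧
     (t1 m n - t1 (-(m+n)) m ≠ 0) ∧
     (t1 m n - t1 (-m) (-n) ≠ 0) ∧
     (t1 m n - t1 n (-(m+n)) ≠ 0) ∧
     (t1 m n - t1 (m+n) (-m) ≠ 0)) := by
  intro t1
  have hm : m ≠ 0 := fun h' => h (by rw [h']; ring)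
  have hn : n ≠ 0 := fun h' => h (by rw [h']; ring)
  have hmn : m + n ≠ 0 := fun h' => h (by rw [h']; ring)
  have hq : m^2 + m*n + n^2 ≠ 0 := by
    intro heq
    have h4 : (2*m+n)^2 + 3*n^2 = 0 := by linear_combination 4*heq
    have : n = 0 := by nlinarith [sq_nonneg (2*m+n), sq_nonneg n]
    exact hn this
  have e1 : t1 m n - t1 (-n) (m+n) = -2*m*n^2 := by simp only [t1]; ring
  have e2 : t1 m n - t1 (-(m+n)) m = 2*n*(m^2+m*n+n^2) := by simp only [t1]; ring
  have e3 : t1 m n - t1 (-m) (-n) = 2*(t1 m n) := by simp only [t1]; ring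
  have e4 : t1 m n - t1 n (-(m+n)) = 2*(m+n)*(m^2+m*n+n^2) := by simp only [t1]; ring
  have e5 : t1 m n - t1 (m+n) (-m) = 2*m^2*(m+n) := by simp only [t1]; ring
  refine ⟨e1, e2, e3, e4, e5, ?_, ?_, ?_, ?_, ?_⟩
  · rw [e1]
    exact mul_ne_zero (mul_ne_zero (by norm_num) hm) (pow_ne_zero 2 hn)
  · rw [e2]
    exact mul_ne_zero (mul_ne_zero (by norm_num) hn) hq
  · rw [e3]
    have := t1_ne m n hm hn
    simp only [t1]
    intro h'
    exact this (by linarith)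
  · rw [e4]
    exact mul_ne_zero (mul_ne_zero (by norm_num) hmn) hq
  · rw [e5]
    exact mul_ne_zero (mul_ne_zero (by norm_num) (pow_ne_zero 2 hm)) hmn
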